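/- Define w : ℝ → ℝ by w(t) = exp(1/((t+1)(t−1)))·cos(1/((t+1)(t−1))) for −1 < t < 1 and w(t) = 0 for |t| ≥ 1. Then w is C^∞ on ℝ, and w has infinitely many simple zeros in the open interval (−1,1): the set {t ∈ (−1,1) : w(t) = 0 and w'(t) ≠ 0} is infinite. -/

import Mathlib

noncomputable section
open Set Real Filter Polynomial
open scoped Topology

/-- The function `w(t) = exp(1/((t+1)(t−1))) cos(1/((t+1)(t−1)))` for `−1 < t < 1`,
extended by `0` outside `(−1, 1)`. -/
def w (t : ℝ) : ℝ :=
  if -1 < t ∧ t < 1 then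
    Real.exp (1 / ((t + 1) * (t - 1))) * Real.cos (1 / ((t + 1) * (t - 1)))
  else 0

/-- Complex glue: `exp(-(1+i)/x)` for `x > 0`, `0` for `x ≤ 0`. -/
def cGlue (x : ℝ) : ℂ := if x ≤ 0 then 0 else Complex.exp (-(1 + Complex.I) * ((x⁻¹ : ℝ) : ℂ))

lemma cGlue_of_nonpos {x : ℝ} (hx : x ≤ 0) : cGlue x = 0 := if_pos hx

lemma norm_cGlue {x : ℝ} (hx : 0 < x) : ‖cGlue x‖ = Real.exp (-x⁻¹) := by
  rw [cGlue, if_neg (not_le.2 hx), Complex.norm_exp]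
  congr 1
  simp [Complex.add_re, Complex.mul_re]

lemma tendsto_monomial_cGlue (n : ℕ) :
    Tendsto (fun x : ℝ => ((x⁻¹ : ℝ) : ℂ) ^ n * cGlue x) (𝓝 0) (𝓝 0) := by
  have h := (expNegInvGlue.tendsto_polynomial_inv_mul_zero (X ^ n)).abs
  rw [abs_zero] at h
  refine squeeze_zero_norm (fun x => ?_) (h.congr fun x => rfl)
  rcases le_or_gt x 0 with hx | hx
  · simp [cGlue_of_nonpos hx, abs_nonneg]
    positivity
  · rw [norm_mul, norm_pow, Complex.norm_real, norm_cGlue hx,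
      eval_pow, eval_X, abs_mul, abs_pow]
    rw [expNegInvGlue, if_neg (not_le.2 hx), abs_of_pos (Real.exp_pos _), Real.norm_eq_abs]

lemma tendsto_poly_cGlue (p : ℂ[X]) :
    Tendsto (fun x : ℝ => p.eval ((x⁻¹ : ℝ) : ℂ) * cGlue x) (𝓝 0) (𝓝 0) := by
  have : (fun x : ℝ => p.eval ((x⁻¹ : ℝ) : ℂ) * cGlue x) =
      fun x : ℝ => ∑ i ∈ Finset.range (p.natDegree + 1),
        p.coeff i * (((x⁻¹ : ℝ) : ℂ) ^ i * cGlue x) := by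
    funext x
    rw [eval_eq_sum_range, Finset.sum_mul]
    simp [mul_assoc]
  rw [this]
  have : (0 : ℂ) = ∑ i ∈ Finset.range (p.natDegree + 1), p.coeff i * 0 := by simp
  rw [this]
  exact tendsto_finset_sum _ fun i _ => (tendsto_monomial_cGlue i).const_mul _

lemma hasDerivAt_poly_cGlue (p : ℂ[X]) (x : ℝ) :
    HasDerivAt (fun x : ℝ => p.eval ((x⁻¹ : ℝ) : ℂ) * cGlue x)
      ((X ^ 2 * (C (1 + Complex.I) * p - derivative p)).eval ((x⁻¹ : ℝ) : ℂ) * cGlue x) x := by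
  rcases lt_trichotomy x 0 with hx | rfl | hx
  · rw [cGlue_of_nonpos hx.le, mul_zero]
    refine (hasDerivAt_const _ 0).congr_of_eventuallyEq ?_
    filter_upwards [gt_mem_nhds hx] with y hy
    rw [cGlue_of_nonpos hy.le, mul_zero]
  · rw [cGlue_of_nonpos le_rfl, mul_zero, hasDerivAt_iff_tendsto_slope]
    refine ((tendsto_poly_cGlue (p * X)).mono_left inf_le_left).congr fun x ↦ ?_
    simp [slope_def_module, cGlue_of_nonpos le_rfl, Complex.real_smul]
    ring
  · set c : ℂ := 1 + Complex.I with hc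
    have h1 : HasDerivAt (fun z : ℂ => p.eval z * Complex.exp (-c * z))
        ((derivative p).eval ((x⁻¹ : ℝ) : ℂ) * Complex.exp (-c * ((x⁻¹ : ℝ) : ℂ))
          + p.eval ((x⁻¹ : ℝ) : ℂ) * (Complex.exp (-c * ((x⁻¹ : ℝ) : ℂ)) * -c))
        ((x⁻¹ : ℝ) : ℂ) := by
      exact (p.hasDerivAt _).mul (((hasDerivAt_id _).const_mul (-c)).cexp.congr_deriv (by simp only [id_eq, mul_one]))
    have h2 := h1.comp_ofReal (z := x⁻¹)
    have h3 := h2.scomp x (hasDerivAt_inv hx.ne')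
    refine (h3.congr_of_eventuallyEq ?_).congr_deriv ?_
    · filter_upwards [lt_mem_nhds hx] with y hy
      simp only [Function.comp, cGlue, if_neg (not_le.2 hy), hc]
    · rw [cGlue, if_neg (not_le.2 hx)]
      have : ((((x : ℝ) ^ 2)⁻¹ : ℝ) : ℂ) = ((x⁻¹ : ℝ) : ℂ) ^ 2 := by
        push_cast [inv_pow]; ring
      simp only [Complex.real_smul, eval_mul, eval_pow, eval_X, eval_sub, eval_C]
      push_cast [inv_pow]
      ring

lemma differentiable_poly_cGlue (p : ℂ[X]) :
    Differentiable ℝ (fun x : ℝ => p.eval ((x⁻¹ : ℝ) : ℂ) * cGlue x) := fun x =>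
  (hasDerivAt_poly_cGlue p x).differentiableAt

lemma contDiff_poly_cGlue {n : ℕ∞} (p : ℂ[X]) :
    ContDiff ℝ n (fun x : ℝ => p.eval ((x⁻¹ : ℝ) : ℂ) * cGlue x) := by
  apply contDiff_all_iff_nat.2 (fun m => ?_) n
  induction m generalizing p with
  | zero => exact contDiff_zero.2 (differentiable_poly_cGlue p).continuous
  | succ m ihm =>
    rw [show ((m + 1 : ℕ) : WithTop ℕ∞) = m + 1 from rfl]
    refine contDiff_succ_iff_deriv.2 ⟨differentiable_poly_cGlue _, by simp, ?_⟩
    rw [show deriv _ = _ from funext fun y => (hasDerivAt_poly_cGlue p y).deriv]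
    exact ihm (X ^ 2 * (C (1 + Complex.I) * p - derivative p))

lemma contDiff_cGlue {n : ℕ∞} : ContDiff ℝ n cGlue := by
  simpa using contDiff_poly_cGlue (n := n) 1

lemma w_eq_re_cGlue : w = fun t => (cGlue (1 - t ^ 2)).re := by
  funext t
  rw [w]
  split_ifs with ht
  · have h1 : (0:ℝ) < 1 - t ^ 2 := by nlinarith [ht.1, ht.2]
    rw [cGlue, if_neg (not_le.2 h1)]
    have h2 : ((t + 1) * (t - 1)) = -(1 - t ^ 2) := by ring
    set u : ℝ := 1 / ((t + 1) * (t - 1)) with hu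
    have h4 : ((1 - t ^ 2)⁻¹ : ℝ) = -u := by rw [hu, h2, one_div, inv_neg, neg_neg]
    rw [h4, Complex.exp_re]
    have hre : (-(1 + Complex.I) * ((-u : ℝ) : ℂ)).re = u := by simp
    have him : (-(1 + Complex.I) * ((-u : ℝ) : ℂ)).im = u := by simp
    rw [hre, him]
  · have h1 : 1 - t ^ 2 ≤ 0 := by
      rcases not_and_or.1 ht with h | h
      · nlinarith [not_lt.1 h]
      · nlinarith [not_lt.1 h]
    rw [cGlue_of_nonpos h1, Complex.zero_re]

lemma contDiff_w : ContDiff ℝ (⊤ : ℕ∞) w := by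
  rw [w_eq_re_cGlue]
  exact Complex.reCLM.contDiff.comp (contDiff_cGlue.comp ((contDiff_const.sub (contDiff_id.pow 2))))

lemma deriv_w_eq {t : ℝ} (h1 : -1 < t) (h2 : t < 1) :
    deriv w t = Real.exp (1 / ((t + 1) * (t - 1))) * (-(2 * t) / ((t + 1) * (t - 1)) ^ 2) *
        Real.cos (1 / ((t + 1) * (t - 1))) +
      Real.exp (1 / ((t + 1) * (t - 1))) *
        (-Real.sin (1 / ((t + 1) * (t - 1))) * (-(2 * t) / ((t + 1) * (t - 1)) ^ 2)) := by
  have hane : (t + 1) * (t - 1) ≠ 0 := by nlinarith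
  have ha : HasDerivAt (fun t : ℝ => (t + 1) * (t - 1)) (2 * t) t := by
    have := (((hasDerivAt_id t).add_const 1).mul ((hasDerivAt_id t).sub_const 1))
    refine this.congr_deriv ?_
    simp only [id]; ring
  have hu : HasDerivAt (fun t : ℝ => 1 / ((t + 1) * (t - 1)))
      (-(2 * t) / ((t + 1) * (t - 1)) ^ 2) t := by
    simpa [one_div] using ha.fun_inv hane
  have hW : HasDerivAt
      (fun t : ℝ => Real.exp (1 / ((t + 1) * (t - 1))) * Real.cos (1 / ((t + 1) * (t - 1)))) _ t :=
    hu.exp.mul hu.cos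
  have heq : w =ᶠ[𝓝 t]
      fun t : ℝ => Real.exp (1 / ((t + 1) * (t - 1))) * Real.cos (1 / ((t + 1) * (t - 1))) := by
    filter_upwards [isOpen_Ioo.mem_nhds (show t ∈ Ioo (-1:ℝ) 1 from ⟨h1, h2⟩)] with y hy
    exact if_pos ⟨hy.1, hy.2⟩
  rw [heq.deriv_eq, hW.deriv]

/-- `w` is `C^∞` on `ℝ` and has infinitely many simple zeros in
`(−1, 1)`: the set of `t ∈ (−1,1)` with `w(t) = 0` and `w'(t) ≠ 0` is infinite. -/
theorem stmt_17 :
    ContDiff ℝ (⊤ : ℕ∞) w ∧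
      {t : ℝ | -1 < t ∧ t < 1 ∧ w t = 0 ∧ deriv w t ≠ 0}.Infinite := by
  refine ⟨contDiff_w, ?_⟩
  set d : ℕ → ℝ := fun k => π / 2 + k * π with hd
  have hd1 : ∀ k, 1 < d k := fun k => by
    have := Real.pi_gt_three
    have : (0:ℝ) ≤ k * π := by positivity
    simp only [hd]; nlinarith
  set f : ℕ → ℝ := fun k => Real.sqrt (1 - 1 / d k) with hf
  have hfmono : StrictMono f := by
    intro k l hkl
    have h0k : (0:ℝ) < d k := lt_trans one_pos (hd1 k)
    have hdkl : d k < d l := by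
      simp only [hd]
      have : (k:ℝ) < l := by exact_mod_cast hkl
      nlinarith [Real.pi_gt_three]
    have : 1 / d l < 1 / d k := one_div_lt_one_div_of_lt h0k hdkl
    apply Real.sqrt_lt_sqrt
    · have := hd1 k
      have : 1 / d k < 1 := by rw [div_lt_one h0k]; exact hd1 k
      linarith
    · linarith
  refine Set.infinite_of_injective_forall_mem (f := f) hfmono.injective ?_
  intro k
  have h0k : (0:ℝ) < d k := lt_trans one_pos (hd1 k)
  have hlt : 1 / d k < 1 := by rw [div_lt_one h0k]; exact hd1 k
  have hpos : 0 < 1 / d k := by positivity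
  have hsq : f k ^ 2 = 1 - 1 / d k := Real.sq_sqrt (by linarith)
  have htk0 : 0 < f k := Real.sqrt_pos.2 (by linarith)
  have htk1 : f k < 1 := by
    rw [hf]
    have : (1:ℝ) - 1 / d k < 1 := by linarith
    calc Real.sqrt (1 - 1 / d k) < Real.sqrt 1 := Real.sqrt_lt_sqrt (by linarith) this
      _ = 1 := Real.sqrt_one
  have hm1 : -1 < f k := by linarith
  have ha : (f k + 1) * (f k - 1) = -(1 / d k) := by
    have : (f k + 1) * (f k - 1) = f k ^ 2 - 1 := by ring
    rw [this, hsq]; ring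
  have hu : 1 / ((f k + 1) * (f k - 1)) = -d k := by
    rw [ha, one_div, inv_neg, inv_div, div_one]
  have hcos : Real.cos (-d k) = 0 := by
    rw [Real.cos_neg]
    simp only [hd]
    have : π / 2 + (k:ℝ) * π = (k:ℝ) * π + π / 2 := by ring
    rw [this, Real.cos_add_pi_div_two, Real.sin_nat_mul_pi, neg_zero]
  have hsin : Real.sin (-d k) ≠ 0 := by
    intro h
    have := Real.sin_sq_add_cos_sq (-d k)
    rw [h, hcos] at this
    norm_num at this
  refine ⟨hm1, htk1, ?_, ?_⟩
  · show w (f k) = 0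
    rw [w, if_pos ⟨hm1, htk1⟩, hu, hcos, mul_zero]
  · rw [deriv_w_eq hm1 htk1, hu, hcos, mul_zero, zero_add]
    have hane : (f k + 1) * (f k - 1) ≠ 0 := by nlinarith
    have h2t : -(2 * f k) / ((f k + 1) * (f k - 1)) ^ 2 ≠ 0 := by
      apply div_ne_zero (by linarith) (pow_ne_zero _ hane)
    exact mul_ne_zero (Real.exp_ne_zero _) (mul_ne_zero (neg_ne_zero.2 hsin) h2t)
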